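/- For every countable ordinal α, every interval [a,b] with a<b, and every real r>0, there exists f ∈ Den[a,b] with ∫_a^b f = 0 and f(a)=f(b)=0 such that the function F(x)=∫_a^x f satisfies ω(F,[a,b]) = r and a,b ∈ D_F^α([a,b]). In particular, for every countable ordinal α there exists f ∈ Den[a,b] whose indefinite Denjoy integral F satisfies: the least ordinal β with D_F^β([a,b]) = D_F^{β+1}([a,b]) is strictly greater than α. -/

import Mathlib

open MeasureTheory Set Filter

noncomputable section

attribute [local instance] Classical.propDecidable

/-- The oscillation `ω(F, J)` of `F` on the set `J`. -/
def osc (F : ℝ → ℝ) (J : Set ℝ) : ℝ :=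
  sSup {d : ℝ | ∃ x ∈ J, ∃ y ∈ J, d = |F x - F y|}

/-- `D` is a `K`-edged pre-partition of `[a,b]`: a finite nonempty collection of
pairwise non-overlapping closed subintervals of `[a,b]` whose endpoints lie in `K`. -/
def IsPrePartition (a b : ℝ) (K : Set ℝ) (D : Finset (ℝ × ℝ)) : Prop :=
  D.Nonempty ∧
  (∀ p ∈ D, p.1 ≤ p.2 ∧ p.1 ∈ K ∧ p.2 ∈ K ∧ Icc p.1 p.2 ⊆ Icc a b) ∧
  (D : Set (ℝ × ℝ)).Pairwise fun p q => p.2 ≤ q.1 ∨ q.2 ≤ p.1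

/-- `F ∈ AC_*(K)`: absolute continuity in the restricted sense on `K`. -/
def ACStar (a b : ℝ) (F : ℝ → ℝ) (K : Set ℝ) : Prop :=
  ∀ ε > (0:ℝ), ∃ δ > (0:ℝ), ∀ D : Finset (ℝ × ℝ), IsPrePartition a b K D →
    (∑ p ∈ D, (p.2 - p.1)) < δ → (∑ p ∈ D, osc F (Icc p.1 p.2)) < ε

/-- `F ∈ ACG_*(K)`: `K` is a countable union of closed sets `Kₙ ⊆ [a,b]` with `F ∈ AC_*(Kₙ)`. -/
def ACGStar (a b : ℝ) (F : ℝ → ℝ) (K : Set ℝ) : Prop :=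
  ∃ C : ℕ → Set ℝ, (∀ n, IsClosed (C n) ∧ C n ⊆ Icc a b ∧ ACStar a b F (C n)) ∧
    K = ⋃ n, C n

/-- `F` is the indefinite Denjoy integral of `f` on `[a,b]`:
`F` is continuous on `[a,b]`, `F(a) = 0`, `F ∈ ACG_*([a,b])`, and `F' = f` a.e. on `[a,b]`. -/
def HasDenjoyIntegralFn (a b : ℝ) (f F : ℝ → ℝ) : Prop :=
  ContinuousOn F (Icc a b) ∧ F a = 0 ∧ ACGStar a b F (Icc a b) ∧
    ∀ᵐ x ∂(volume.restrict (Icc a b)), HasDerivAt F (f x) x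

/-- `f ∈ Den[a,b]`: `f` is Denjoy integrable on `[a,b]`. -/
def DenjoyIntegrable (a b : ℝ) (f : ℝ → ℝ) : Prop :=
  ∃ F : ℝ → ℝ, HasDenjoyIntegralFn a b f F

/-- The Denjoy integral `∫_a^b f` (junk value `0` if `f` is not Denjoy integrable). -/
def denjoyIntegral (a b : ℝ) (f : ℝ → ℝ) : ℝ :=
  if h : DenjoyIntegrable a b f then Classical.choose h b else 0

/-- The derivative `D_f(K)`: points of `K` at which `f` is not locally Lebesgue integrable
relative to `K`. -/
def Df (f : ℝ → ℝ) (K : Set ℝ) : Set ℝ :=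
  {x ∈ K | ∀ c d : ℝ, c < x → x < d → ¬ IntegrableOn f (Icc c d ∩ K) volume}

/-- The derivative `D_F(K)`: points of `K` at which `F` is not locally `AC_*` relative to `K`. -/
def DF (a b : ℝ) (F : ℝ → ℝ) (K : Set ℝ) : Set ℝ :=
  {x ∈ K | ∀ c d : ℝ, c < x → x < d → ¬ ACStar a b F (Icc c d ∩ K)}

/-- The derivative `D_{f,F}(K) = D_f(K) ∪ D_F(K)`. -/
def DfF (a b : ℝ) (f F : ℝ → ℝ) (K : Set ℝ) : Set ℝ := Df f K ∪ DF a b F K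

/-- Transfinite iterates of a derivative operation on sets:
`D⁰(K) = K`, `D^(α+1)(K) = D(D^α(K))`, and `D^α(K) = ⋂_(β<α) D^β(K)` for limit `α`. -/
def derivIter (D : Set ℝ → Set ℝ) (K : Set ℝ) (α : Ordinal.{0}) : Set ℝ :=
  Ordinal.limitRecOn α K (fun _ ih => D ih) (fun o _ ih => ⋂ β : Iio o, ih β.1 β.2)

/-- `D^∞(K) = ⋂_(α<ω₁) D^α(K)`. -/
def derivInfty (D : Set ℝ → Set ℝ) (K : Set ℝ) : Set ℝ :=
  ⋂ (α : Ordinal.{0}) (_ : α.card ≤ Cardinal.aleph0), derivIter D K α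


/-! ### Auxiliary lemmas about `osc` -/

lemma dj_osc_le {F : ℝ → ℝ} {J : Set ℝ} {B : ℝ} (hB : 0 ≤ B)
    (h : ∀ x ∈ J, ∀ y ∈ J, |F x - F y| ≤ B) : osc F J ≤ B := by
  refine Real.sSup_le ?_ hB
  rintro z ⟨x, hx, y, hy, rfl⟩
  exact h x hx y hy

lemma dj_le_osc {F : ℝ → ℝ} {J : Set ℝ} {B : ℝ} (h : ∀ u ∈ J, ∀ v ∈ J, |F u - F v| ≤ B)
    {x y : ℝ} (hx : x ∈ J) (hy : y ∈ J) : |F x - F y| ≤ osc F J := by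
  refine le_csSup ⟨B, ?_⟩ ⟨x, hx, y, hy, rfl⟩
  rintro z ⟨u, hu, v, hv, rfl⟩
  exact h u hu v hv

lemma dj_osc_congr {F G : ℝ → ℝ} {J : Set ℝ} (h : Set.EqOn F G J) : osc F J = osc G J := by
  unfold osc
  congr 1
  ext z
  constructor
  · rintro ⟨x, hx, y, hy, rfl⟩; exact ⟨x, hx, y, hy, by rw [h hx, h hy]⟩
  · rintro ⟨x, hx, y, hy, rfl⟩; exact ⟨x, hx, y, hy, by rw [h hx, h hy]⟩

lemma dj_osc_nonneg {F : ℝ → ℝ} {J : Set ℝ} (hJ : J.Nonempty) : 0 ≤ osc F J := by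
  obtain ⟨x, hx⟩ := hJ
  by_cases hbdd : BddAbove {d : ℝ | ∃ x ∈ J, ∃ y ∈ J, d = |F x - F y|}
  · have : |F x - F x| ≤ osc F J := le_csSup hbdd ⟨x, hx, x, hx, rfl⟩
    simpa using this
  · simp only [osc]
    rw [Real.sSup_of_not_bddAbove hbdd]

/-! ### Auxiliary lemmas about `ACStar` -/

lemma dj_prePartition_transfer {a b c d : ℝ} {K : Set ℝ} {D : Finset (ℝ × ℝ)}
    (hK : K ⊆ Icc c d) (hsub : Icc c d ⊆ Icc a b) :
    IsPrePartition a b K D ↔ IsPrePartition c d K D := by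
  constructor <;> rintro ⟨h1, h2, h3⟩ <;> refine ⟨h1, fun p hp => ?_, h3⟩
  · obtain ⟨hle, hp1, hp2, _⟩ := h2 p hp
    exact ⟨hle, hp1, hp2, fun z hz => ⟨le_trans (hK hp1).1 hz.1, le_trans hz.2 (hK hp2).2⟩⟩
  · obtain ⟨hle, hp1, hp2, hsub'⟩ := h2 p hp
    exact ⟨hle, hp1, hp2, fun z hz => hsub (hsub' hz)⟩

lemma dj_acStar_mono {a b : ℝ} {F : ℝ → ℝ} {S T : Set ℝ} (hST : S ⊆ T)
    (h : ACStar a b F T) : ACStar a b F S := by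
  intro ε hε
  obtain ⟨δ, hδ, hD⟩ := h ε hε
  refine ⟨δ, hδ, fun D hDpre hlen => hD D ?_ hlen⟩
  obtain ⟨h1, h2, h3⟩ := hDpre
  exact ⟨h1, fun p hp => ⟨(h2 p hp).1, hST (h2 p hp).2.1, hST (h2 p hp).2.2.1, (h2 p hp).2.2.2⟩, h3⟩

lemma dj_acStar_transfer {a b c d : ℝ} {F G : ℝ → ℝ} {S : Set ℝ}
    (hS : S ⊆ Icc c d) (hsub : Icc c d ⊆ Icc a b) (hFG : Set.EqOn F G (Icc c d)) :
    ACStar c d G S ↔ ACStar a b F S := by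
  have hosc : ∀ D : Finset (ℝ × ℝ), IsPrePartition c d S D →
      (∑ p ∈ D, osc F (Icc p.1 p.2)) = (∑ p ∈ D, osc G (Icc p.1 p.2)) := by
    intro D hD
    refine Finset.sum_congr rfl fun p hp => ?_
    obtain ⟨_, h2, _⟩ := hD
    obtain ⟨hle, _, _, hsub'⟩ := h2 p hp
    exact dj_osc_congr fun z hz => hFG (hsub' hz)
  constructor <;> intro h ε hε <;> obtain ⟨δ, hδ, hD⟩ := h ε hε <;> refine ⟨δ, hδ, fun D hDpre hlen => ?_⟩
  · have hDpre' := (dj_prePartition_transfer hS hsub).mp hDpre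
    have := hD D hDpre' hlen
    rwa [← hosc D hDpre'] at this
  · have hDpre' := (dj_prePartition_transfer hS hsub).mpr hDpre
    have := hD D hDpre' hlen
    rwa [hosc D hDpre] at this

lemma dj_acStar_of_lip {a b : ℝ} {F : ℝ → ℝ} (K : Set ℝ) (L : ℝ) (hL : 0 ≤ L)
    (h : ∀ x ∈ Icc a b, ∀ y ∈ Icc a b, |F x - F y| ≤ L * |x - y|) : ACStar a b F K := by
  intro ε hε
  refine ⟨ε / (L + 1), by positivity, fun D hD hlen => ?_⟩
  have hLpos : (0:ℝ) < L + 1 := by linarith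
  have hterm : ∀ p ∈ D, osc F (Icc p.1 p.2) ≤ (L + 1) * (p.2 - p.1) := by
    intro p hp
    obtain ⟨hle, _, _, hsub⟩ := hD.2.1 p hp
    have hB : 0 ≤ L * (p.2 - p.1) := mul_nonneg hL (by linarith)
    have hosc : osc F (Icc p.1 p.2) ≤ L * (p.2 - p.1) := by
      refine dj_osc_le hB fun x hx y hy => ?_
      calc |F x - F y| ≤ L * |x - y| := h x (hsub hx) y (hsub hy)
        _ ≤ L * (p.2 - p.1) := by
            refine mul_le_mul_of_nonneg_left ?_ hL
            rw [abs_le]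
            constructor <;> nlinarith [hx.1, hx.2, hy.1, hy.2]
    nlinarith
  calc (∑ p ∈ D, osc F (Icc p.1 p.2)) ≤ ∑ p ∈ D, (L + 1) * (p.2 - p.1) :=
        Finset.sum_le_sum hterm
    _ = (L + 1) * ∑ p ∈ D, (p.2 - p.1) := by rw [Finset.mul_sum]
    _ < (L + 1) * (ε / (L + 1)) := by
        refine mul_lt_mul_of_pos_left hlen hLpos
    _ = ε := by field_simp

lemma dj_acStar_singleton {a b x : ℝ} {F : ℝ → ℝ} : ACStar a b F {x} := by
  intro ε hε
  refine ⟨1, one_pos, fun D hD _ => ?_⟩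
  have : ∀ p ∈ D, osc F (Icc p.1 p.2) = 0 := by
    intro p hp
    obtain ⟨_, hp1, hp2, _⟩ := hD.2.1 p hp
    have h1 : p.1 = x := hp1
    have h2 : p.2 = x := hp2
    have : Icc p.1 p.2 = {x} := by rw [h1, h2, Icc_self]
    rw [this]
    have : {d : ℝ | ∃ u ∈ ({x} : Set ℝ), ∃ v ∈ ({x} : Set ℝ), d = |F u - F v|} = {0} := by
      ext z
      simp only [mem_singleton_iff, mem_setOf_eq]
      constructor
      · rintro ⟨u, rfl, v, rfl, rfl⟩; simp
      · rintro rfl; exact ⟨x, rfl, x, rfl, by simp⟩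
    simp only [osc, this, csSup_singleton]
  rw [Finset.sum_congr rfl this]
  simpa using hε

/-! ### Lemmas about `DF` and `derivIter` -/

lemma dj_DF_subset {a b : ℝ} {F : ℝ → ℝ} {K : Set ℝ} : DF a b F K ⊆ K := fun _ hx => hx.1

lemma dj_DF_isClosed {a b : ℝ} {F : ℝ → ℝ} {K : Set ℝ} (hK : IsClosed K) :
    IsClosed (DF a b F K) := by
  refine isClosed_of_closure_subset fun x hx => ?_
  have hxK : x ∈ K := by
    have : closure (DF a b F K) ⊆ closure K := closure_mono dj_DF_subset
    exact hK.closure_subset (this hx)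
  refine ⟨hxK, fun c d hc hd hAC => ?_⟩
  obtain ⟨y, hy, hy2⟩ := mem_closure_iff.mp hx (Ioo c d) isOpen_Ioo ⟨hc, hd⟩
  exact hy2.2 c d hy.1 hy.2 hAC

lemma dj_DF_compare {a b c d : ℝ} {F G : ℝ → ℝ} {K K' : Set ℝ}
    (h1 : K' ⊆ K) (h2 : K' ⊆ Icc c d) (h3 : Icc c d ⊆ Icc a b)
    (h4 : Set.EqOn F G (Icc c d)) : DF c d G K' ⊆ DF a b F K := by
  rintro x ⟨hxK', hx⟩
  refine ⟨h1 hxK', fun c' d' hc' hd' hAC => ?_⟩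
  refine hx c' d' hc' hd' ?_
  have hsub : Icc c' d' ∩ K' ⊆ Icc c' d' ∩ K := inter_subset_inter_right _ h1
  have hsub2 : Icc c' d' ∩ K' ⊆ Icc c d := fun z hz => h2 hz.2
  exact (dj_acStar_transfer hsub2 h3 h4).mpr (dj_acStar_mono hsub hAC)

lemma dj_derivIter_zero (D : Set ℝ → Set ℝ) (K : Set ℝ) : derivIter D K 0 = K :=
  Ordinal.limitRecOn_zero _ _ _

lemma dj_derivIter_succ (D : Set ℝ → Set ℝ) (K : Set ℝ) (α : Ordinal.{0}) :
    derivIter D K (α + 1) = D (derivIter D K α) := by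
  rw [derivIter, Ordinal.add_one_eq_succ, Ordinal.limitRecOn_succ]
  rfl

lemma dj_derivIter_limit (D : Set ℝ → Set ℝ) (K : Set ℝ) {o : Ordinal.{0}} (ho : Order.IsSuccLimit o) :
    derivIter D K o = ⋂ β : Iio o, derivIter D K β.1 := by
  rw [derivIter, Ordinal.limitRecOn_limit _ _ _ _ ho]
  rfl

lemma dj_derivIter_subset {D : Set ℝ → Set ℝ} {K : Set ℝ} (hD : ∀ S, D S ⊆ S)
    (α : Ordinal.{0}) : derivIter D K α ⊆ K := by
  induction α using Ordinal.limitRecOn with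
  | zero => rw [dj_derivIter_zero]
  | add_one β ih =>
      rw [dj_derivIter_succ]
      exact (hD _).trans ih
  | limit o ho ih =>
      rw [dj_derivIter_limit D K ho]
      intro x hx
      have := mem_iInter.mp hx ⟨0, ho.pos⟩
      rw [dj_derivIter_zero] at this
      exact this

lemma dj_derivIter_anti {D : Set ℝ → Set ℝ} {K : Set ℝ} (hD : ∀ S, D S ⊆ S)
    {β γ : Ordinal.{0}} (h : β ≤ γ) : derivIter D K γ ⊆ derivIter D K β := by
  induction γ using Ordinal.limitRecOn with
  | zero => rw [nonpos_iff_eq_zero.mp h]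
  | add_one γ ih =>
      rcases eq_or_lt_of_le h with rfl | hlt
      · exact subset_rfl
      · have hβγ : β ≤ γ := by rw [Ordinal.add_one_eq_succ] at hlt; exact Order.lt_succ_iff.mp hlt
        rw [dj_derivIter_succ]
        exact (hD _).trans (ih hβγ)
  | limit o ho ih =>
      rcases eq_or_lt_of_le h with rfl | hlt
      · exact subset_rfl
      · rw [dj_derivIter_limit D K ho]
        intro x hx
        exact mem_iInter.mp hx ⟨β, hlt⟩

lemma dj_derivIter_isClosed {D : Set ℝ → Set ℝ} {K : Set ℝ}
    (hD : ∀ S, IsClosed S → IsClosed (D S)) (hK : IsClosed K) (α : Ordinal.{0}) :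
    IsClosed (derivIter D K α) := by
  induction α using Ordinal.limitRecOn with
  | zero => rwa [dj_derivIter_zero]
  | add_one β ih =>
      rw [dj_derivIter_succ]
      exact hD _ ih
  | limit o ho ih =>
      rw [dj_derivIter_limit D K ho]
      exact isClosed_iInter fun β => ih β.1 β.2

lemma dj_derivIter_compare {a b c d : ℝ} {F G : ℝ → ℝ} {K : Set ℝ}
    (h0 : Icc c d ⊆ K) (h3 : Icc c d ⊆ Icc a b) (h4 : Set.EqOn F G (Icc c d))
    (α : Ordinal.{0}) :
    derivIter (DF c d G) (Icc c d) α ⊆ derivIter (DF a b F) K α := by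
  induction α using Ordinal.limitRecOn with
  | zero => rw [dj_derivIter_zero, dj_derivIter_zero]; exact h0
  | add_one β ih =>
      rw [dj_derivIter_succ, dj_derivIter_succ]
      exact dj_DF_compare ih (dj_derivIter_subset (fun _ => dj_DF_subset) β) h3 h4
  | limit o ho ih =>
      rw [dj_derivIter_limit _ _ ho, dj_derivIter_limit _ _ ho]
      exact fun x hx => mem_iInter.mpr fun β => ih β.1 β.2 (mem_iInter.mp hx β)

lemma dj_derivIter_fixed {D : Set ℝ → Set ℝ} {K : Set ℝ} (hD : ∀ S, D S ⊆ S)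
    {β : Ordinal.{0}} (h : derivIter D K β = derivIter D K (β + 1))
    {γ : Ordinal.{0}} (hγ : β ≤ γ) : derivIter D K γ = derivIter D K β := by
  induction γ using Ordinal.limitRecOn with
  | zero => rw [nonpos_iff_eq_zero.mp hγ]
  | add_one γ ih =>
      rcases eq_or_lt_of_le hγ with rfl | hlt
      · rfl
      · have hβγ : β ≤ γ := by rw [Ordinal.add_one_eq_succ] at hlt; exact Order.lt_succ_iff.mp hlt
        rw [dj_derivIter_succ, ih hβγ, ← dj_derivIter_succ D K β, ← h]
  | limit o ho ih =>
      rcases eq_or_lt_of_le hγ with rfl | hlt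
      · rfl
      · rw [dj_derivIter_limit D K ho]
        apply subset_antisymm
        · intro x hx
          exact mem_iInter.mp hx ⟨β, hlt⟩
        · intro x hx
          refine mem_iInter.mpr fun δ => ?_
          rcases le_or_gt β δ.1 with hle | hlt'
          · rw [ih δ.1 δ.2 hle]; exact hx
          · exact dj_derivIter_anti hD hlt'.le hx

/-! ### No nonempty closed fixed point for an `ACG*` function -/

lemma dj_no_fixed_point {a b : ℝ} {F : ℝ → ℝ} {K : Set ℝ}
    (hACG : ACGStar a b F (Icc a b)) (hKcl : IsClosed K) (hKsub : K ⊆ Icc a b)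
    (hne : K.Nonempty) (hfix : DF a b F K = K) : False := by
  obtain ⟨C, hC, hCun⟩ := hACG
  have hKc : ∀ n, IsClosed ((fun y : K => (y : ℝ)) ⁻¹' C n) := fun n =>
    (hC n).1.preimage continuous_subtype_val
  have hne' : Nonempty K := hne.to_subtype
  haveI : CompleteSpace K := hKcl.completeSpace_coe
  have hcov : ⋃ n, ((fun y : K => (y : ℝ)) ⁻¹' C n) = univ := by
    ext y
    simp only [mem_iUnion, mem_univ, iff_true, mem_preimage]
    have : (y : ℝ) ∈ Icc a b := hKsub y.2
    rw [hCun] at this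
    exact mem_iUnion.mp this
  obtain ⟨n, x, hx⟩ := nonempty_interior_of_iUnion_of_closed hKc hcov
  have hU' : ∃ U : Set ℝ, IsOpen U ∧ (x : ℝ) ∈ U ∧
      ((fun y : K => (y : ℝ)) ⁻¹' U) ⊆ ((fun y : K => (y : ℝ)) ⁻¹' C n) := by
    rw [mem_interior] at hx
    obtain ⟨t, hts, htopen, hxt⟩ := hx
    obtain ⟨U, hUopen, hU⟩ := isOpen_induced_iff.mp htopen
    exact ⟨U, hUopen, by rw [← hU] at hxt; exact hxt, by rw [← hU] at hts; exact hts⟩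
  obtain ⟨U, hUopen, hxU, hUsub⟩ := hU'
  obtain ⟨ε, hε, hball⟩ := Metric.isOpen_iff.mp hUopen _ hxU
  have hxDF : (x : ℝ) ∈ DF a b F K := by rw [hfix]; exact x.2
  refine hxDF.2 ((x : ℝ) - ε / 2) ((x : ℝ) + ε / 2) (by linarith) (by linarith) ?_
  refine dj_acStar_mono ?_ (hC n).2.2
  intro z hz
  have hzK : z ∈ K := hz.2
  have hzball : z ∈ Metric.ball (x : ℝ) ε := by
    rw [Real.ball_eq_Ioo]
    have := hz.1
    constructor <;> [linarith [this.1]; linarith [this.2]]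
  have : (⟨z, hzK⟩ : K) ∈ (fun y : K => (y : ℝ)) ⁻¹' C n := hUsub (hball hzball)
  exact this

/-! ### The packaged induction predicate -/

/-- All the properties of the pair `(f, F)` that we carry through the induction,
except for the `derivIter` memberships. -/
def GoodPair (a b r : ℝ) (f F : ℝ → ℝ) : Prop :=
  HasDenjoyIntegralFn a b f F ∧ Continuous F ∧ (∀ x, x ∉ Ioo a b → F x = 0) ∧
  (∀ x, 0 ≤ F x) ∧ (∀ x, F x ≤ r) ∧ (∃ x, F x = r) ∧ (∀ x, x ∉ Ioo a b → f x = 0)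

lemma dj_goodPair_xstar {a b r : ℝ} {f F : ℝ → ℝ} (h : GoodPair a b r f F) (hr : 0 < r) :
    ∃ x ∈ Ioo a b, F x = r := by
  obtain ⟨x, hx⟩ := h.2.2.2.2.2.1
  refine ⟨x, ?_, hx⟩
  by_contra hxI
  rw [h.2.2.1 x hxI] at hx
  exact absurd hx.symm hr.ne'

lemma dj_goodPair_osc {a b r : ℝ} {f F : ℝ → ℝ} (h : GoodPair a b r f F) (hab : a < b)
    (hr : 0 < r) : osc F (Icc a b) = r := by
  have hbd : ∀ u ∈ Icc a b, ∀ v ∈ Icc a b, |F u - F v| ≤ r := by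
    intro u _ v _
    rw [abs_le]
    constructor <;> nlinarith [h.2.2.2.1 u, h.2.2.2.1 v, h.2.2.2.2.1 u, h.2.2.2.2.1 v]
  obtain ⟨x, hxI, hx⟩ := dj_goodPair_xstar h hr
  refine le_antisymm (dj_osc_le hr.le hbd) ?_
  have := dj_le_osc hbd (Ioo_subset_Icc_self hxI) (left_mem_Icc.mpr hab.le)
  rw [hx, h.2.2.1 a (fun hc => lt_irrefl a hc.1), sub_zero, abs_of_pos hr] at this
  exact this

/-! ### A helper trigonometric estimate -/

lemma dj_abs_sin_sub_sin (p q : ℝ) : |Real.sin p - Real.sin q| ≤ |p - q| := by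
  rw [Real.sin_sub_sin]
  have h1 : |Real.sin ((p - q) / 2)| ≤ |(p - q) / 2| := Real.abs_sin_le_abs
  have h2 : |Real.cos ((p + q) / 2)| ≤ 1 :=
    abs_le.mpr ⟨Real.neg_one_le_cos _, Real.cos_le_one _⟩
  have h3 : |(p - q) / 2| = |p - q| / 2 := by rw [abs_div]; norm_num
  calc |2 * Real.sin ((p - q) / 2) * Real.cos ((p + q) / 2)|
      = 2 * |Real.sin ((p - q) / 2)| * |Real.cos ((p + q) / 2)| := by
        rw [abs_mul, abs_mul]; norm_num
    _ ≤ 2 * |(p - q) / 2| * 1 := by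
        apply mul_le_mul _ h2 (abs_nonneg _) (by positivity)
        exact mul_le_mul_of_nonneg_left h1 (by norm_num)
    _ = |p - q| := by rw [h3]; ring

/-! ### The base (rank-zero) construction: a smooth bump -/

lemma dj_base (a b : ℝ) (hab : a < b) (r : ℝ) (hr : 0 < r) :
    ∃ f F : ℝ → ℝ, GoodPair a b r f F := by
  set u : ℝ → ℝ := fun x => Real.pi * (x - a) / (b - a) with hu_def
  set F : ℝ → ℝ := fun x => r * Real.sin (u (max a (min x b))) ^ 2 with hF_def
  set f : ℝ → ℝ := fun x =>
    if x ∈ Ioo a b then r * ((2:ℕ) * Real.sin (u x) ^ 1 * (Real.cos (u x) * (Real.pi / (b - a))))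
    else 0 with hf_def
  have hba : b - a ≠ 0 := sub_ne_zero.mpr hab.ne'
  have hproj : ∀ x ∈ Icc a b, max a (min x b) = x := by
    intro x hx
    rw [min_eq_left hx.2, max_eq_right hx.1]
  have hFcont : Continuous F := by
    apply continuous_const.mul
    apply (Real.continuous_sin.comp ?_).pow
    exact (continuous_const.mul ((continuous_const.max (continuous_id.min continuous_const)).sub
      continuous_const)).div_const _
  have hFzero : ∀ x, x ∉ Ioo a b → F x = 0 := by
    intro x hx
    rcases not_and_or.mp hx with hx | hx
    · push_neg at hx
      have h1 : min x b = x := min_eq_left (le_trans hx hab.le)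
      have h2 : max a x = a := max_eq_left hx
      simp only [hF_def, h1, h2, hu_def]
      norm_num
    · push_neg at hx
      have h1 : min x b = b := min_eq_right hx
      have h2 : max a b = b := max_eq_right hab.le
      have h3 : u b = Real.pi := by simp only [hu_def]; field_simp
      simp only [hF_def, h1, h2, h3]
      simp [Real.sin_pi]
  have hFnn : ∀ x, 0 ≤ F x := fun x => by positivity
  have hFle : ∀ x, F x ≤ r := by
    intro x
    have h1 := Real.sin_sq_le_one (u (max a (min x b)))
    have h2 : F x = r * Real.sin (u (max a (min x b))) ^ 2 := rfl
    nlinarith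
  have hFmax : ∃ x, F x = r := by
    refine ⟨(a + b) / 2, ?_⟩
    have hm : max a (min ((a+b)/2) b) = (a+b)/2 := hproj _ ⟨by linarith, by linarith⟩
    have hu2 : u ((a+b)/2) = Real.pi / 2 := by
      simp only [hu_def]
      rw [div_eq_iff hba]
      ring
    simp only [hF_def, hm, hu2, Real.sin_pi_div_two]
    ring
  have hFa : F a = 0 := hFzero a (fun hc => lt_irrefl a hc.1)
  have hlip : ∀ x ∈ Icc a b, ∀ y ∈ Icc a b,
      |F x - F y| ≤ (r * (2 * Real.pi / (b - a))) * |x - y| := by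
    intro x hx y hy
    rw [hF_def]
    simp only [hproj x hx, hproj y hy]
    have key : Real.sin (u x) ^ 2 - Real.sin (u y) ^ 2
        = (Real.sin (u x) - Real.sin (u y)) * (Real.sin (u x) + Real.sin (u y)) := by ring
    have h1 : |Real.sin (u x) - Real.sin (u y)| ≤ |u x - u y| := dj_abs_sin_sub_sin _ _
    have h2 : |Real.sin (u x) + Real.sin (u y)| ≤ 2 := by
      have := Real.neg_one_le_sin (u x)
      have := Real.sin_le_one (u x)
      have := Real.neg_one_le_sin (u y)
      have := Real.sin_le_one (u y)
      rw [abs_le]; constructor <;> linarith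
    have h3 : u x - u y = Real.pi * (x - y) / (b - a) := by
      simp only [hu_def]; field_simp; ring
    have h4 : |u x - u y| = Real.pi * |x - y| / (b - a) := by
      rw [h3, abs_div, abs_mul, abs_of_pos Real.pi_pos, abs_of_pos (by linarith : (0:ℝ) < b - a)]
    have e1 : |r * Real.sin (u x) ^ 2 - r * Real.sin (u y) ^ 2|
        = |r| * (|Real.sin (u x) - Real.sin (u y)| * |Real.sin (u x) + Real.sin (u y)|) := by
      rw [← abs_mul, ← abs_mul]
      congr 1
      ring
    rw [e1, abs_of_pos hr]
    calc r * (|Real.sin (u x) - Real.sin (u y)| * |Real.sin (u x) + Real.sin (u y)|)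
        ≤ r * (|u x - u y| * 2) := by
          apply mul_le_mul_of_nonneg_left _ hr.le
          apply mul_le_mul h1 h2 (abs_nonneg _) (abs_nonneg _)
      _ = (r * (2 * Real.pi / (b - a))) * |x - y| := by rw [h4]; ring
  have hACG : ACGStar a b F (Icc a b) := by
    refine ⟨fun _ => Icc a b, fun n => ⟨isClosed_Icc, subset_rfl, ?_⟩, (iUnion_const _).symm⟩
    have hL : 0 ≤ r * (2 * Real.pi / (b - a)) := by
      have := Real.pi_pos
      have : (0:ℝ) < b - a := by linarith
      positivity
    exact dj_acStar_of_lip _ _ hL hlip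
  have hderiv : ∀ x ∈ Ioo a b, HasDerivAt F (f x) x := by
    intro x hx
    have hud : HasDerivAt u (Real.pi / (b - a)) x := by
      have : HasDerivAt (fun y : ℝ => Real.pi * (y - a) / (b - a))
          (Real.pi * 1 / (b - a)) x :=
        (((hasDerivAt_id x).sub_const a).const_mul Real.pi).div_const (b - a)
      simpa using this
    have hsin : HasDerivAt (fun y => Real.sin (u y)) (Real.cos (u x) * (Real.pi / (b - a))) x :=
      (Real.hasDerivAt_sin (u x)).comp x hud
    have hsq : HasDerivAt (fun y => Real.sin (u y) ^ 2)
        ((2:ℕ) * Real.sin (u x) ^ 1 * (Real.cos (u x) * (Real.pi / (b - a)))) x := hsin.pow 2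
    have hmul := hsq.const_mul r
    have hfx : f x = r * ((2:ℕ) * Real.sin (u x) ^ 1 * (Real.cos (u x) * (Real.pi / (b - a)))) :=
      if_pos hx
    rw [hfx]
    refine hmul.congr_of_eventuallyEq ?_
    filter_upwards [isOpen_Ioo.mem_nhds hx] with y hy
    simp only [hF_def, hproj y (Ioo_subset_Icc_self hy)]
  refine ⟨f, F, ⟨⟨hFcont.continuousOn, hFa, hACG, ?_⟩, hFcont, hFzero, hFnn, hFle, hFmax, ?_⟩⟩
  · have h1 : ∀ᵐ x ∂(volume.restrict (Icc a b)), x ∈ Icc a b :=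
      ae_restrict_mem measurableSet_Icc
    have h2 : ∀ᵐ x ∂(volume.restrict (Icc a b)), x ≠ a ∧ x ≠ b := by
      have hc : (volume.restrict (Icc a b)) ({a, b} : Set ℝ) = 0 := by
        have h0 : (volume : Measure ℝ) ({a, b} : Set ℝ) = 0 :=
          Set.Countable.measure_zero (by simp) _
        exact le_antisymm ((Measure.restrict_apply_le _ _).trans h0.le) zero_le
      filter_upwards [measure_eq_zero_iff_ae_notMem.mp hc] with x hx
      simp only [mem_insert_iff, mem_singleton_iff] at hx
      push_neg at hx
      exact hx
    filter_upwards [h1, h2] with x hx hxne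
    exact hderiv x ⟨lt_of_le_of_ne hx.1 (Ne.symm hxne.1), lt_of_le_of_ne hx.2 hxne.2⟩
  · intro x hx
    exact if_neg hx

/-! ### Gluing countably many good pairs -/

/-- Data for gluing countably many "good pairs" on non-overlapping subintervals
of `[a,b]` accumulating only at `a` and `b`. -/
structure GlueData (a b r : ℝ) where
  c : ℕ → ℝ
  d : ℕ → ℝ
  ρ : ℕ → ℝ
  g : ℕ → ℝ → ℝ
  G : ℕ → ℝ → ℝ
  hab : a < b
  hr : 0 < r
  h1 : ∀ k, a ≤ c k ∧ c k < d k ∧ d k ≤ b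
  h2 : ∀ k l, k ≠ l → d k ≤ c l ∨ d l ≤ c k
  h3 : ∀ x ∈ Ioo a b, ∃ k, x ∈ Icc (c k) (d k)
  h10 : ∀ x ∈ Ioo a b, (∃ k, x ∈ Ioo (c k) (d k)) ∨ (∃ k l, d k = x ∧ c l = x)
  hρ0 : ∀ k, 0 < ρ k
  hρr : ∀ k, ρ k ≤ r
  hρtop : ∃ k, ρ k = r
  h9a : ∀ ε, 0 < ε → ∃ η, 0 < η ∧ ∀ k, c k < a + η → ρ k < ε
  h9b : ∀ ε, 0 < ε → ∃ η, 0 < η ∧ ∀ k, b - η < d k → ρ k < ε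
  hgood : ∀ k, GoodPair (c k) (d k) (ρ k) (g k) (G k)

namespace GlueData

variable {a b r : ℝ} (gd : GlueData a b r)

/-- The glued primitive. -/
def F : ℝ → ℝ := fun x =>
  if h : ∃ k, x ∈ Ioo (gd.c k) (gd.d k) then gd.G h.choose x else 0

/-- The glued integrand. -/
def f : ℝ → ℝ := fun x =>
  if h : ∃ k, x ∈ Ioo (gd.c k) (gd.d k) then gd.g h.choose x else 0

lemma uniq {x : ℝ} {k l : ℕ} (hk : x ∈ Ioo (gd.c k) (gd.d k))
    (hl : x ∈ Ioo (gd.c l) (gd.d l)) : k = l := by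
  by_contra hne
  rcases gd.h2 k l hne with h | h
  · exact absurd (hk.2.trans_le (h.trans hl.1.le)) (lt_irrefl x)
  · exact absurd (hl.2.trans_le (h.trans hk.1.le)) (lt_irrefl x)

lemma F_eq {x : ℝ} {k : ℕ} (hk : x ∈ Ioo (gd.c k) (gd.d k)) : gd.F x = gd.G k x := by
  have h : ∃ k, x ∈ Ioo (gd.c k) (gd.d k) := ⟨k, hk⟩
  rw [F, dif_pos h, gd.uniq h.choose_spec hk]

lemma f_eq {x : ℝ} {k : ℕ} (hk : x ∈ Ioo (gd.c k) (gd.d k)) : gd.f x = gd.g k x := by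
  have h : ∃ k, x ∈ Ioo (gd.c k) (gd.d k) := ⟨k, hk⟩
  rw [f, dif_pos h, gd.uniq h.choose_spec hk]

lemma F_zero {x : ℝ} (h : ∀ k, x ∉ Ioo (gd.c k) (gd.d k)) : gd.F x = 0 := by
  rw [F, dif_neg (by push_neg; exact fun k => h k)]

lemma f_zero {x : ℝ} (h : ∀ k, x ∉ Ioo (gd.c k) (gd.d k)) : gd.f x = 0 := by
  rw [f, dif_neg (by push_neg; exact fun k => h k)]

lemma c_not_mem (l k : ℕ) : gd.c l ∉ Ioo (gd.c k) (gd.d k) := by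
  intro h
  rcases eq_or_ne k l with rfl | hne
  · exact lt_irrefl _ h.1
  rcases gd.h2 k l hne with hkl | hkl
  · exact absurd (h.2.trans_le hkl) (lt_irrefl _)
  · exact absurd (((gd.h1 l).2.1.trans_le hkl).trans h.1) (lt_irrefl _)

lemma d_not_mem (l k : ℕ) : gd.d l ∉ Ioo (gd.c k) (gd.d k) := by
  intro h
  rcases eq_or_ne k l with rfl | hne
  · exact lt_irrefl _ h.2
  rcases gd.h2 k l hne with hkl | hkl
  · exact absurd ((h.2.trans_le hkl).trans (gd.h1 l).2.1) (lt_irrefl _)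
  · exact absurd (h.1.trans_le hkl) (lt_irrefl _)

lemma eqOn (k : ℕ) : Set.EqOn gd.F (gd.G k) (Icc (gd.c k) (gd.d k)) := by
  intro x hx
  rcases eq_or_lt_of_le hx.1 with rfl | hlt
  · rw [gd.F_zero (fun l => gd.c_not_mem k l),
      (gd.hgood k).2.2.1 _ (fun hc => lt_irrefl _ hc.1)]
  rcases eq_or_lt_of_le hx.2 with rfl | hlt2
  · rw [gd.F_zero (fun l => gd.d_not_mem k l),
      (gd.hgood k).2.2.1 _ (fun hc => lt_irrefl _ hc.2)]
  exact gd.F_eq ⟨hlt, hlt2⟩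

lemma Ioo_subset (k : ℕ) : Ioo (gd.c k) (gd.d k) ⊆ Ioo a b := fun z hz =>
  ⟨(gd.h1 k).1.trans_lt hz.1, hz.2.trans_le (gd.h1 k).2.2⟩

lemma F_outer {x : ℝ} (h : x ∉ Ioo a b) : gd.F x = 0 :=
  gd.F_zero fun k hk => h (gd.Ioo_subset k hk)

lemma f_outer {x : ℝ} (h : x ∉ Ioo a b) : gd.f x = 0 :=
  gd.f_zero fun k hk => h (gd.Ioo_subset k hk)

lemma F_nonneg (x : ℝ) : 0 ≤ gd.F x := by
  by_cases h : ∃ k, x ∈ Ioo (gd.c k) (gd.d k)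
  · obtain ⟨k, hk⟩ := h
    rw [gd.F_eq hk]
    exact (gd.hgood k).2.2.2.1 x
  · push_neg at h
    rw [gd.F_zero h]

lemma F_le (x : ℝ) : gd.F x ≤ r := by
  by_cases h : ∃ k, x ∈ Ioo (gd.c k) (gd.d k)
  · obtain ⟨k, hk⟩ := h
    rw [gd.F_eq hk]
    exact ((gd.hgood k).2.2.2.2.1 x).trans (gd.hρr k)
  · push_neg at h
    rw [gd.F_zero h]
    exact gd.hr.le

lemma F_max : ∃ x, gd.F x = r := by
  obtain ⟨k, hk⟩ := gd.hρtop
  obtain ⟨x, hxI, hx⟩ := dj_goodPair_xstar (gd.hgood k) (gd.hρ0 k)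
  exact ⟨x, by rw [gd.F_eq hxI, hx, hk]⟩

lemma cont : Continuous gd.F := by
  rw [continuous_iff_continuousAt]
  intro x
  by_cases hx : ∃ k, x ∈ Ioo (gd.c k) (gd.d k)
  · obtain ⟨k, hk⟩ := hx
    refine ((gd.hgood k).2.1.continuousAt).congr ?_
    filter_upwards [isOpen_Ioo.mem_nhds hk] with y hy
    exact (gd.F_eq hy).symm
  push_neg at hx
  rcases lt_trichotomy x a with hxa | rfl | hax
  · refine (continuousAt_const : ContinuousAt (fun _ => (0:ℝ)) x).congr ?_
    filter_upwards [Iio_mem_nhds hxa] with y hy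
    exact (gd.F_outer (fun hc => absurd hc.1 (not_lt.mpr hy.le))).symm
  · -- x = a
    rw [Metric.continuousAt_iff]
    intro ε hε
    obtain ⟨η, hη, hηs⟩ := gd.h9a ε hε
    refine ⟨min η (b - x), by simp [hη, gd.hab], fun {y} hy => ?_⟩
    rw [Real.dist_eq] at hy
    have hFa : gd.F x = 0 := gd.F_outer (fun hc => lt_irrefl x hc.1)
    rw [Real.dist_eq, hFa, sub_zero]
    rcases le_or_gt y x with hya | hya
    · rw [gd.F_outer (fun hc => absurd (hc.1.trans_le hya) (lt_irrefl x))]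
      rwa [abs_zero]
    · have habs := abs_lt.mp hy
      have hm1 := min_le_left η (b - x)
      have hm2 := min_le_right η (b - x)
      have hyb : y < b := by linarith [habs.2]
      obtain ⟨k, hk⟩ := gd.h3 y ⟨hya, hyb⟩
      have hck : gd.c k < x + η := by linarith [hk.1, habs.2]
      have hρ : gd.ρ k < ε := hηs k hck
      have hFy : gd.F y = gd.G k y := gd.eqOn k hk
      rw [hFy, abs_of_nonneg ((gd.hgood k).2.2.2.1 y)]
      exact lt_of_le_of_lt ((gd.hgood k).2.2.2.2.1 y) hρ
  rcases lt_trichotomy x b with hxb | rfl | hbx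
  · -- a < x < b, junction point
    rcases gd.h10 x ⟨hax, hxb⟩ with ⟨k, hk⟩ | ⟨k, l, hdk, hcl⟩
    · exact absurd hk (hx k)
    have hk1 := gd.h1 k
    have hl1 := gd.h1 l
    have hcwk : ContinuousWithinAt gd.F (Icc (gd.c k) (gd.d k)) x := by
      refine ((gd.hgood k).2.1.continuousWithinAt).congr (fun y hy => gd.eqOn k hy) ?_
      exact gd.eqOn k (by rw [← hdk]; exact ⟨hk1.2.1.le, le_refl _⟩)
    have hcwl : ContinuousWithinAt gd.F (Icc (gd.c l) (gd.d l)) x := by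
      refine ((gd.hgood l).2.1.continuousWithinAt).congr (fun y hy => gd.eqOn l hy) ?_
      exact gd.eqOn l (by rw [← hcl]; exact ⟨le_refl _, hl1.2.1.le⟩)
    refine (hcwk.union hcwl).continuousAt ?_
    have hun : Icc (gd.c k) (gd.d k) ∪ Icc (gd.c l) (gd.d l) = Icc (gd.c k) (gd.d l) := by
      have e1 : gd.d k = x := hdk
      have e2 : gd.c l = x := hcl
      rw [e1, e2]
      exact Icc_union_Icc_eq_Icc (e1 ▸ hk1.2.1.le) (e2 ▸ hl1.2.1.le)
    rw [hun]
    exact Icc_mem_nhds (hdk ▸ hk1.2.1) (hcl ▸ hl1.2.1)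
  · -- x = b
    rw [Metric.continuousAt_iff]
    intro ε hε
    obtain ⟨η, hη, hηs⟩ := gd.h9b ε hε
    refine ⟨min η (x - a), by simp [hη, gd.hab], fun {y} hy => ?_⟩
    rw [Real.dist_eq] at hy
    have hFb : gd.F x = 0 := gd.F_outer (fun hc => lt_irrefl x hc.2)
    rw [Real.dist_eq, hFb, sub_zero]
    rcases le_or_gt x y with hby | hby
    · rw [gd.F_outer (fun hc => absurd (hby.trans_lt hc.2) (lt_irrefl x))]
      rwa [abs_zero]
    · have habs := abs_lt.mp hy
      have hm1 := min_le_left η (x - a)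
      have hm2 := min_le_right η (x - a)
      have hay : a < y := by linarith [habs.1]
      obtain ⟨k, hk⟩ := gd.h3 y ⟨hay, hby⟩
      have hdk : x - η < gd.d k := by linarith [hk.2, habs.1]
      have hρ : gd.ρ k < ε := hηs k hdk
      have hFy : gd.F y = gd.G k y := gd.eqOn k hk
      rw [hFy, abs_of_nonneg ((gd.hgood k).2.2.2.1 y)]
      exact lt_of_le_of_lt ((gd.hgood k).2.2.2.2.1 y) hρ
  · refine (continuousAt_const : ContinuousAt (fun _ => (0:ℝ)) x).congr ?_
    filter_upwards [Ioi_mem_nhds hbx] with y hy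
    exact (gd.F_outer (fun hc => absurd hc.2 (not_lt.mpr hy.le))).symm

lemma acg : ACGStar a b gd.F (Icc a b) := by
  have hIccsub : ∀ k, Icc (gd.c k) (gd.d k) ⊆ Icc a b := fun k z hz =>
    ⟨(gd.h1 k).1.trans hz.1, hz.2.trans (gd.h1 k).2.2⟩
  have hfam : ∀ k, ∃ C : ℕ → Set ℝ,
      (∀ n, IsClosed (C n) ∧ C n ⊆ Icc (gd.c k) (gd.d k) ∧ ACStar (gd.c k) (gd.d k) (gd.G k) (C n)) ∧
      Icc (gd.c k) (gd.d k) = ⋃ n, C n := fun k => (gd.hgood k).1.2.2.1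
  choose Cf hCf1 hCf2 using hfam
  refine ⟨fun n => if n = 0 then {a} else if n = 1 then {b}
    else Cf (n - 2).unpair.1 (n - 2).unpair.2, fun n => ?_, ?_⟩
  · rcases eq_or_ne n 0 with rfl | hn0
    · simp only [if_pos rfl]
      exact ⟨isClosed_singleton, by simp [gd.hab.le], dj_acStar_singleton⟩
    rcases eq_or_ne n 1 with rfl | hn1
    · simp only [if_neg one_ne_zero, if_pos rfl]
      exact ⟨isClosed_singleton, by simp [gd.hab.le], dj_acStar_singleton⟩
    simp only [if_neg hn0, if_neg hn1]
    set k := (n - 2).unpair.1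
    set m := (n - 2).unpair.2
    refine ⟨(hCf1 k m).1, (hCf1 k m).2.1.trans (hIccsub k), ?_⟩
    refine (dj_acStar_transfer ((hCf1 k m).2.1) (hIccsub k) ?_).mp (hCf1 k m).2.2
    exact fun z hz => gd.eqOn k hz
  · apply subset_antisymm
    · intro x hxI
      rcases eq_or_lt_of_le hxI.1 with rfl | hax
      · exact mem_iUnion.mpr ⟨0, by simp⟩
      rcases eq_or_lt_of_le hxI.2 with rfl | hxb
      · exact mem_iUnion.mpr ⟨1, by simp⟩
      obtain ⟨k, hk⟩ := gd.h3 x ⟨hax, hxb⟩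
      have : x ∈ ⋃ m, Cf k m := by rw [← hCf2 k]; exact hk
      obtain ⟨m, hm⟩ := mem_iUnion.mp this
      refine mem_iUnion.mpr ⟨Nat.pair k m + 2, ?_⟩
      simp only [Nat.add_sub_cancel, Nat.unpair_pair]
      norm_num
      exact hm
    · intro x hx
      obtain ⟨n, hn⟩ := mem_iUnion.mp hx
      rcases eq_or_ne n 0 with rfl | hn0
      · simp only [if_pos rfl, mem_singleton_iff] at hn
        rw [hn]; exact left_mem_Icc.mpr gd.hab.le
      rcases eq_or_ne n 1 with rfl | hn1
      · simp only [if_neg one_ne_zero, if_pos rfl, mem_singleton_iff] at hn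
        rw [hn]; exact right_mem_Icc.mpr gd.hab.le
      simp only [if_neg hn0, if_neg hn1] at hn
      exact hIccsub _ ((hCf1 _ _).2.1 hn)

lemma denjoy : HasDenjoyIntegralFn a b gd.f gd.F := by
  refine ⟨gd.cont.continuousOn, gd.F_outer (fun hc => lt_irrefl a hc.1), gd.acg, ?_⟩
  have hae : ∀ k, ∀ᵐ x ∂(volume : Measure ℝ),
      x ∈ Icc (gd.c k) (gd.d k) → HasDerivAt (gd.G k) (gd.g k x) x := fun k =>
    (ae_restrict_iff' measurableSet_Icc).mp (gd.hgood k).1.2.2.2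
  have hall : ∀ᵐ x ∂(volume : Measure ℝ),
      ∀ k, x ∈ Icc (gd.c k) (gd.d k) → HasDerivAt (gd.G k) (gd.g k x) x := ae_all_iff.mpr hae
  have hTc : (({a, b} ∪ (Set.range gd.c ∪ Set.range gd.d)) : Set ℝ).Countable :=
    ((Set.countable_singleton b).insert a).union
      ((Set.countable_range gd.c).union (Set.countable_range gd.d))
  have hT0 : (volume : Measure ℝ) ({a, b} ∪ (Set.range gd.c ∪ Set.range gd.d)) = 0 :=
    hTc.measure_zero _
  have hT : ∀ᵐ x ∂(volume : Measure ℝ), x ∉ ({a, b} ∪ (Set.range gd.c ∪ Set.range gd.d)) :=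
    measure_eq_zero_iff_ae_notMem.mp hT0
  rw [ae_restrict_iff' measurableSet_Icc]
  filter_upwards [hall, hT] with x hx1 hx2 hxmem
  have hxa : x ≠ a := fun hc => hx2 (by rw [hc]; exact Or.inl (by simp))
  have hxb : x ≠ b := fun hc => hx2 (by rw [hc]; exact Or.inl (by simp))
  have hxI : x ∈ Ioo a b :=
    ⟨lt_of_le_of_ne hxmem.1 (Ne.symm hxa), lt_of_le_of_ne hxmem.2 hxb⟩
  rcases gd.h10 x hxI with ⟨k, hk⟩ | ⟨k, l, hdk, _⟩
  · have hgd := hx1 k (Ioo_subset_Icc_self hk)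
    rw [gd.f_eq hk]
    refine hgd.congr_of_eventuallyEq ?_
    filter_upwards [isOpen_Ioo.mem_nhds hk] with y hy
    exact gd.F_eq hy
  · exact absurd (Or.inr (Or.inr ⟨k, hdk⟩)) hx2

lemma goodPair : GoodPair a b r gd.f gd.F :=
  ⟨gd.denjoy, gd.cont, fun _ h => gd.F_outer h, gd.F_nonneg, gd.F_le, gd.F_max,
    fun _ h => gd.f_outer h⟩

end GlueData

/-! ### Arithmetic helpers -/

lemma dj_harmonic (J : ℕ) : ∃ M, J < M ∧ 1 ≤ ∑ j ∈ Finset.Ico J M, (1 / ((j:ℝ) + 1)) := by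
  have h := Real.tendsto_sum_range_one_div_nat_succ_atTop
  obtain ⟨M, hM⟩ :=
    (h.eventually_ge_atTop ((∑ j ∈ Finset.range J, (1 / ((j:ℝ) + 1))) + 1)).exists
  refine ⟨max M (J + 1), lt_of_lt_of_le (Nat.lt_succ_self J) (le_max_right _ _), ?_⟩
  have hJle : J ≤ max M (J + 1) := le_trans (Nat.le_succ J) (le_max_right _ _)
  rw [Finset.sum_Ico_eq_sub _ hJle]
  have hmono : (∑ j ∈ Finset.range M, (1 / ((j:ℝ) + 1)))
      ≤ ∑ j ∈ Finset.range (max M (J + 1)), (1 / ((j:ℝ) + 1)) := by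
    apply Finset.sum_le_sum_of_subset_of_nonneg
    · exact Finset.range_subset_range.mpr (le_max_left _ _)
    · intro i _ _; positivity
  linarith

lemma dj_geom (J M : ℕ) : ∑ j ∈ Finset.Ico J M, ((2:ℝ)⁻¹) ^ (j + 2) ≤ ((2:ℝ)⁻¹) ^ (J + 1) := by
  rcases le_or_gt J M with hJM | hJM
  · have : ∀ j, ((2:ℝ)⁻¹) ^ (j + 2) = ((2:ℝ)⁻¹) ^ j * ((2:ℝ)⁻¹) ^ 2 := fun j => pow_add _ _ _
    rw [Finset.sum_congr rfl (fun j _ => this j), ← Finset.sum_mul,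
      geom_sum_Ico (by norm_num : ((2:ℝ)⁻¹) ≠ 1) hJM]
    have h1 : (0:ℝ) ≤ ((2:ℝ)⁻¹) ^ M := by positivity
    have h2 : ((2:ℝ)⁻¹ ^ M - 2⁻¹ ^ J) / (2⁻¹ - 1) * 2⁻¹ ^ 2
        = ((2:ℝ)⁻¹ ^ J - 2⁻¹ ^ M) * 2⁻¹ := by ring
    rw [h2, pow_succ]
    nlinarith [pow_pos (by norm_num : (0:ℝ) < 2⁻¹) J]
  · rw [Finset.Ico_eq_empty (by omega)]
    simp only [Finset.sum_empty]
    positivity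

/-- Refuting `ACStar` from a family of witness pre-partitions. -/
lemma dj_refute {a b : ℝ} {F : ℝ → ℝ} {K : Set ℝ} {ε₀ : ℝ} (hε₀ : 0 < ε₀)
    (hAC : ACStar a b F K)
    (H : ∀ δ, 0 < δ → ∃ S : Finset ℕ, ∃ u v : ℕ → ℝ, S.Nonempty ∧
      (∀ j ∈ S, u j < v j ∧ u j ∈ K ∧ v j ∈ K ∧ Icc (u j) (v j) ⊆ Icc a b) ∧
      (∀ j ∈ S, ∀ j' ∈ S, j ≠ j' → v j ≤ u j' ∨ v j' ≤ u j) ∧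
      (∑ j ∈ S, (v j - u j)) < δ ∧ ε₀ ≤ ∑ j ∈ S, osc F (Icc (u j) (v j))) : False := by
  obtain ⟨δ, hδ, hbound⟩ := hAC ε₀ hε₀
  obtain ⟨S, u, v, hSne, hS1, hS2, hSlen, hSosc⟩ := H δ hδ
  set D : Finset (ℝ × ℝ) := S.image (fun j => (u j, v j)) with hD
  have hinj : Set.InjOn (fun j => (u j, v j)) S := by
    intro j hj j' hj' heq
    by_contra hne
    have hfst : u j = u j' := congrArg Prod.fst heq
    have hsnd : v j = v j' := congrArg Prod.snd heq
    rcases hS2 j hj j' hj' hne with h | h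
    · linarith [(hS1 j hj).1]
    · linarith [(hS1 j' hj').1]
  have hpre : IsPrePartition a b K D := by
    refine ⟨hSne.image _, ?_, ?_⟩
    · intro p hp
      obtain ⟨j, hj, rfl⟩ := Finset.mem_image.mp hp
      exact ⟨(hS1 j hj).1.le, (hS1 j hj).2.1, (hS1 j hj).2.2.1, (hS1 j hj).2.2.2⟩
    · intro p hp q hq hpq
      obtain ⟨j, hj, rfl⟩ := Finset.mem_image.mp (by exact_mod_cast hp)
      obtain ⟨j', hj', rfl⟩ := Finset.mem_image.mp (by exact_mod_cast hq)
      have hne : j ≠ j' := fun hc => hpq (by rw [hc])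
      exact hS2 j hj j' hj' hne
  have hlen : (∑ p ∈ D, (p.2 - p.1)) < δ := by
    rw [hD, Finset.sum_image hinj]
    exact hSlen
  have hosc : (∑ p ∈ D, osc F (Icc p.1 p.2)) < ε₀ := hbound D hpre hlen
  rw [hD, Finset.sum_image hinj] at hosc
  exact absurd hSosc (not_le.mpr hosc)

/-! ### The main transfinite construction -/

lemma dj_pair_le_sq (n j : ℕ) : Nat.pair n j ≤ (max n j + 1) ^ 2 := by
  rw [Nat.pair]
  split
  · nlinarith [le_max_right n j, le_max_left n j]
  · nlinarith [le_max_right n j, le_max_left n j]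

set_option maxHeartbeats 2000000 in
lemma dj_main : ∀ α : Ordinal.{0}, α.card ≤ Cardinal.aleph0 →
    ∀ a b : ℝ, a < b → ∀ r : ℝ, 0 < r →
    ∃ f F : ℝ → ℝ, GoodPair a b r f F ∧
      a ∈ derivIter (DF a b F) (Icc a b) α ∧ b ∈ derivIter (DF a b F) (Icc a b) α := by
  intro α
  induction α using Ordinal.induction with
  | _ α IH =>
  intro hα a b hab r hr
  rcases eq_or_ne α 0 with rfl | hα0
  · obtain ⟨f, F, hgp⟩ := dj_base a b hab r hr
    refine ⟨f, F, hgp, ?_, ?_⟩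
    · rw [dj_derivIter_zero]; exact left_mem_Icc.mpr hab.le
    · rw [dj_derivIter_zero]; exact right_mem_Icc.mpr hab.le
  -- a surjective enumeration of the ordinals below `α`
  obtain ⟨e, he⟩ : ∃ e : ℕ → ↥(Set.Iio α), Function.Surjective e := by
    haveI : Countable ↥(Set.Iio α) := by
      rw [← Cardinal.mk_le_aleph0_iff, Ordinal.mk_Iio_ordinal, ← Cardinal.lift_aleph0.{1,0}]
      exact Cardinal.lift_le.mpr hα
    haveI : Nonempty ↥(Set.Iio α) := ⟨⟨0, pos_iff_ne_zero.mpr hα0⟩⟩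
    exact exists_surjective_nat _
  have hba : (0:ℝ) < b - a := by linarith
  set q : ℝ := (2:ℝ)⁻¹ with hq
  have hq0 : (0:ℝ) < q := by norm_num [hq]
  have hq1 : q < 1 := by norm_num [hq]
  -- the tiling points
  set x : ℕ → ℝ := fun i => a + (b - a) * q ^ (i + 1) with hx
  set y : ℕ → ℝ := fun i => b - (b - a) * q ^ (i + 1) with hy
  have hyx : ∀ i, y i = a + b - x i := fun i => by simp only [hx, hy]; ring
  have hxa : ∀ i, a < x i := fun i => by
    have : (0:ℝ) < (b - a) * q ^ (i + 1) := by positivity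
    simp only [hx]; linarith
  have hybb : ∀ i, y i < b := fun i => by
    have : (0:ℝ) < (b - a) * q ^ (i + 1) := by positivity
    simp only [hy]; linarith
  have hxanti : ∀ i j, i < j → x j < x i := fun i j hij => by
    simp only [hx]
    have := pow_lt_pow_right_of_lt_one₀ hq0 hq1 (show i + 1 < j + 1 by omega)
    nlinarith [hba]
  have hxmono : ∀ i j, i ≤ j → x j ≤ x i := fun i j hij => by
    rcases eq_or_lt_of_le hij with rfl | h
    · exact le_rfl
    · exact (hxanti i j h).le
  have hymono : ∀ i j, i ≤ j → y i ≤ y j := fun i j hij => by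
    rw [hyx, hyx]
    linarith [hxmono i j hij]
  have hymono' : ∀ i j, i < j → y i < y j := fun i j hij => by
    rw [hyx, hyx]
    linarith [hxanti i j hij]
  have hx0y0 : x 0 = y 0 := by
    rw [hyx]
    simp only [hx, hq]
    norm_num
    ring
  have hxley : ∀ i j, x i ≤ y j :=
    fun i j => le_trans (hxmono 0 i (Nat.zero_le i)) (hx0y0 ▸ hymono 0 j (Nat.zero_le j))
  have hxb : ∀ i, x i < b := fun i => lt_of_le_of_lt (hxley i 0) (hybb 0)
  have hya : ∀ i, a < y i := fun i => lt_of_lt_of_le (hxa 0) (hxley 0 i)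
  -- the copies
  set ce : ℕ → ℝ := fun k => if k % 2 = 0 then x (k / 2 + 1) else y (k / 2) with hce
  set de : ℕ → ℝ := fun k => if k % 2 = 0 then x (k / 2) else y (k / 2 + 1) with hde
  set wgt : ℕ → ℝ := fun i => if i = 0 then 1
    else q ^ ((Nat.unpair i).1 + 1) * (1 / (((Nat.unpair i).2 : ℝ) + 1)) with hwgt
  set rho : ℕ → ℝ := fun k => r * wgt (k / 2) with hrho
  set rk : ℕ → Ordinal.{0} := fun k => (e ((Nat.unpair (k / 2)).1) : Ordinal.{0}) with hrk
  have hw0 : ∀ i, 0 < wgt i := by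
    intro i
    simp only [hwgt]
    split
    · norm_num
    · positivity
  have hw1 : ∀ i, wgt i ≤ 1 := by
    intro i
    simp only [hwgt]
    split
    · exact le_rfl
    · have h1 : q ^ ((Nat.unpair i).1 + 1) ≤ 1 := pow_le_one₀ hq0.le hq1.le
      have h2 : (1:ℝ) / (((Nat.unpair i).2 : ℝ) + 1) ≤ 1 := by
        rw [div_le_one (by positivity)]
        have : (0:ℝ) ≤ ((Nat.unpair i).2 : ℝ) := Nat.cast_nonneg _
        linarith
      have h3 : (0:ℝ) ≤ 1 / (((Nat.unpair i).2 : ℝ) + 1) := by positivity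
      nlinarith [mul_nonneg (sub_nonneg.mpr h1) h3]
  have hwlb : ∀ n j : ℕ, q ^ (n + 1) * (1 / ((j:ℝ) + 1)) ≤ wgt (Nat.pair n j) := by
    intro n j
    simp only [hwgt]
    split
    · next h =>
      have hn0 : n = 0 := by
        have := congrArg (fun t => (Nat.unpair t).1) h
        simpa [Nat.unpair_pair] using this
      have hj0 : j = 0 := by
        have := congrArg (fun t => (Nat.unpair t).2) h
        simpa [Nat.unpair_pair] using this
      subst hn0; subst hj0
      rw [hq]
      norm_num
    · next _ =>
      rw [Nat.unpair_pair]
  have hwtend : ∀ ε : ℝ, 0 < ε → ∃ N : ℕ, ∀ i, N ≤ i → wgt i < ε := by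
    intro ε hε
    obtain ⟨N, hN⟩ := exists_nat_gt (1 / ε)
    have hNε : 1 / ((N:ℝ) + 1) < ε := by
      rw [div_lt_iff₀ (by positivity)]
      have h1 : 1 < ε * N := by
        rw [div_lt_iff₀ hε] at hN
        linarith
      nlinarith
    refine ⟨(N + 1) ^ 2, fun i hi => ?_⟩
    have hi0 : i ≠ 0 := by
      have h1 : 1 ≤ (N + 1) ^ 2 := Nat.one_le_pow 2 (N + 1) (by omega)
      omega
    set n := (Nat.unpair i).1 with hn
    set j := (Nat.unpair i).2 with hj
    have hle : i ≤ (max n j + 1) ^ 2 := by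
      have := dj_pair_le_sq n j
      rwa [hn, hj, Nat.pair_unpair] at this
    have hmax : N ≤ max n j := by
      by_contra hcon
      push_neg at hcon
      have := Nat.pow_le_pow_left (show max n j + 1 ≤ N by omega) 2
      nlinarith [hi, hle]
    simp only [hwgt, if_neg hi0]
    rcases max_cases n j with ⟨hm, _⟩ | ⟨hm, _⟩
    · -- max = n
      have h1 : q ^ (n + 1) ≤ q ^ (N + 1) :=
        pow_le_pow_of_le_one hq0.le hq1.le (by omega)
      have h2 : q ^ (N + 1) ≤ 1 / ((N:ℝ) + 1) := by
        have h2p : ((N:ℝ) + 1) ≤ 2 ^ (N + 1) := by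
          exact_mod_cast Nat.le_of_lt (Nat.lt_two_pow_self (n := N + 1))
        rw [hq, inv_pow, one_div]
        exact inv_anti₀ (by positivity) h2p
      have h3 : (1:ℝ) / (((j:ℕ):ℝ) + 1) ≤ 1 := by
        rw [div_le_one (by positivity)]
        have : (0:ℝ) ≤ ((j:ℕ):ℝ) := Nat.cast_nonneg _
        linarith
      have h4 : (0:ℝ) < q ^ (n+1) := by positivity
      calc q ^ (n + 1) * (1 / (((j:ℕ):ℝ) + 1)) ≤ q ^ (n+1) * 1 :=
            mul_le_mul_of_nonneg_left h3 h4.le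
        _ = q ^ (n+1) := mul_one _
        _ ≤ q ^ (N+1) := h1
        _ ≤ 1 / ((N:ℝ) + 1) := h2
        _ < ε := hNε
    · -- max = j
      have hNj : N ≤ j := by rw [← hm]; exact hmax
      have h1 : q ^ (n + 1) ≤ 1 := pow_le_one₀ hq0.le hq1.le
      have h2 : (1:ℝ) / (((j:ℕ):ℝ) + 1) ≤ 1 / ((N:ℝ) + 1) := by
        apply one_div_le_one_div_of_le (by positivity)
        have : (N:ℝ) ≤ (j:ℝ) := by exact_mod_cast hNj
        linarith
      have h3 : (0:ℝ) < 1 / (((j:ℕ):ℝ) + 1) := by positivity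
      calc q ^ (n + 1) * (1 / (((j:ℕ):ℝ) + 1)) ≤ 1 * (1 / (((j:ℕ):ℝ) + 1)) :=
            mul_le_mul_of_nonneg_right h1 h3.le
        _ = 1 / (((j:ℕ):ℝ) + 1) := one_mul _
        _ ≤ 1 / ((N:ℝ) + 1) := h2
        _ < ε := hNε
  -- basic facts about the copies
  have hh1 : ∀ k, a ≤ ce k ∧ ce k < de k ∧ de k ≤ b := by
    intro k
    by_cases hk : k % 2 = 0
    · simp only [hce, hde, if_pos hk]
      exact ⟨(hxa _).le, hxanti _ _ (Nat.lt_succ_self _), (hxb _).le⟩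
    · simp only [hce, hde, if_neg hk]
      exact ⟨(hya _).le, hymono' _ _ (Nat.lt_succ_self _), (hybb _).le⟩
  have hh2 : ∀ k l, k ≠ l → de k ≤ ce l ∨ de l ≤ ce k := by
    intro k l hkl
    by_cases hk : k % 2 = 0 <;> by_cases hl : l % 2 = 0
    · have hne : k / 2 ≠ l / 2 := by omega
      simp only [hce, hde, if_pos hk, if_pos hl]
      rcases hne.lt_or_gt with h | h
      · right; exact hxmono _ _ (by omega)
      · left; exact hxmono _ _ (by omega)
    · left
      simp only [hce, hde, if_pos hk, if_neg hl]
      exact hxley _ _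
    · right
      simp only [hce, hde, if_neg hk, if_pos hl]
      exact hxley _ _
    · have hne : k / 2 ≠ l / 2 := by omega
      simp only [hce, hde, if_neg hk, if_neg hl]
      rcases hne.lt_or_gt with h | h
      · left; exact hymono _ _ (by omega)
      · right; exact hymono _ _ (by omega)
  -- locating points in the tiling
  have hfind : ∀ z, a < z → z ≤ x 0 → ∃ i, 0 < i ∧ x i < z ∧ z ≤ x (i - 1) := by
    intro z hz hzx
    have hex : ∃ i, x i < z := by
      obtain ⟨n0, hn0⟩ :=
        exists_pow_lt_of_lt_one (div_pos (by linarith : (0:ℝ) < z - a) hba) hq1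
      refine ⟨n0, ?_⟩
      have hq' : q ^ (n0 + 1) ≤ q ^ n0 := pow_le_pow_of_le_one hq0.le hq1.le (Nat.le_succ n0)
      have h2 : q ^ (n0 + 1) < (z - a) / (b - a) := lt_of_le_of_lt hq' hn0
      rw [lt_div_iff₀ hba] at h2
      simp only [hx]
      nlinarith
    have hi0 : x (Nat.find hex) < z := Nat.find_spec hex
    have hi0pos : 0 < Nat.find hex := by
      rcases Nat.eq_zero_or_pos (Nat.find hex) with h0 | h0
      · exfalso; rw [h0] at hi0; linarith
      · exact h0
    refine ⟨Nat.find hex, hi0pos, hi0, ?_⟩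
    have := Nat.find_min hex (show Nat.find hex - 1 < Nat.find hex by omega)
    linarith [not_lt.mp this]
  have hfindy : ∀ z, y 0 < z → z < b → ∃ i, 0 < i ∧ z < y i ∧ y (i - 1) ≤ z := by
    intro z hz hzb
    obtain ⟨i, hipos, h1, h2⟩ := hfind (a + b - z) (by linarith)
      (by have := hyx 0; linarith)
    refine ⟨i, hipos, ?_, ?_⟩
    · rw [hyx]; linarith
    · rw [hyx]; linarith
  have hh3 : ∀ z ∈ Ioo a b, ∃ k, z ∈ Icc (ce k) (de k) := by
    rintro z ⟨haz, hzb⟩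
    rcases le_or_gt z (x 0) with hz0 | hz0
    · obtain ⟨i, hipos, h1, h2⟩ := hfind z haz hz0
      refine ⟨2 * (i - 1), ?_⟩
      simp only [hce, hde, if_pos (by omega : 2 * (i - 1) % 2 = 0),
        (by omega : 2 * (i - 1) / 2 = i - 1)]
      rw [(by omega : i - 1 + 1 = i)]
      exact ⟨h1.le, h2⟩
    · obtain ⟨i, hipos, h1, h2⟩ := hfindy z (hx0y0 ▸ hz0) hzb
      refine ⟨2 * (i - 1) + 1, ?_⟩
      simp only [hce, hde, if_neg (by omega : ¬(2 * (i - 1) + 1) % 2 = 0),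
        (by omega : (2 * (i - 1) + 1) / 2 = i - 1)]
      rw [(by omega : i - 1 + 1 = i)]
      exact ⟨h2, h1.le⟩
  have hh10 : ∀ z ∈ Ioo a b,
      (∃ k, z ∈ Ioo (ce k) (de k)) ∨ (∃ k l, de k = z ∧ ce l = z) := by
    rintro z ⟨haz, hzb⟩
    rcases le_or_gt z (x 0) with hz0 | hz0
    · obtain ⟨i, hipos, h1, h2⟩ := hfind z haz hz0
      rcases eq_or_lt_of_le h2 with heq | hlt
      · right
        rcases Nat.eq_zero_or_pos (i - 1) with h0 | h0
        · refine ⟨2 * (i - 1), 1, ?_, ?_⟩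
          · simp only [hde, if_pos (by omega : 2 * (i - 1) % 2 = 0),
              (by omega : 2 * (i - 1) / 2 = i - 1)]
            exact heq.symm
          · simp only [hce, if_neg (by norm_num : ¬(1 % 2 = 0)), (by norm_num : 1 / 2 = 0)]
            rw [← hx0y0, ← h0]
            exact heq.symm
        · refine ⟨2 * (i - 1), 2 * (i - 2), ?_, ?_⟩
          · simp only [hde, if_pos (by omega : 2 * (i - 1) % 2 = 0),
              (by omega : 2 * (i - 1) / 2 = i - 1)]
            exact heq.symm
          · simp only [hce, if_pos (by omega : 2 * (i - 2) % 2 = 0),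
              (by omega : 2 * (i - 2) / 2 = i - 2)]
            rw [(by omega : i - 2 + 1 = i - 1)]
            exact heq.symm
      · left
        refine ⟨2 * (i - 1), ?_⟩
        simp only [hce, hde, if_pos (by omega : 2 * (i - 1) % 2 = 0),
          (by omega : 2 * (i - 1) / 2 = i - 1)]
        rw [(by omega : i - 1 + 1 = i)]
        exact ⟨h1, hlt⟩
    · obtain ⟨i, hipos, h1, h2⟩ := hfindy z (hx0y0 ▸ hz0) hzb
      rcases eq_or_lt_of_le h2 with heq | hlt
      · right
        rcases Nat.eq_zero_or_pos (i - 1) with h0 | h0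
        · refine ⟨0, 2 * (i - 1) + 1, ?_, ?_⟩
          · simp only [hde, if_pos (by norm_num : 0 % 2 = 0), (by norm_num : 0 / 2 = 0)]
            rw [hx0y0, ← h0]
            exact heq
          · simp only [hce, if_neg (by omega : ¬(2 * (i - 1) + 1) % 2 = 0),
              (by omega : (2 * (i - 1) + 1) / 2 = i - 1)]
            exact heq
        · refine ⟨2 * (i - 2) + 1, 2 * (i - 1) + 1, ?_, ?_⟩
          · simp only [hde, if_neg (by omega : ¬(2 * (i - 2) + 1) % 2 = 0),
              (by omega : (2 * (i - 2) + 1) / 2 = i - 2)]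
            rw [(by omega : i - 2 + 1 = i - 1)]
            exact heq
          · simp only [hce, if_neg (by omega : ¬(2 * (i - 1) + 1) % 2 = 0),
              (by omega : (2 * (i - 1) + 1) / 2 = i - 1)]
            exact heq
      · left
        refine ⟨2 * (i - 1) + 1, ?_⟩
        simp only [hce, hde, if_neg (by omega : ¬(2 * (i - 1) + 1) % 2 = 0),
          (by omega : (2 * (i - 1) + 1) / 2 = i - 1)]
        rw [(by omega : i - 1 + 1 = i)]
        exact ⟨hlt, h1⟩
  have hrho0 : ∀ k, 0 < rho k := fun k => by
    simp only [hrho]; exact mul_pos hr (hw0 _)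
  have hrhor : ∀ k, rho k ≤ r := fun k => by
    simp only [hrho]
    nlinarith [hw1 (k / 2), hw0 (k / 2), mul_nonneg hr.le (sub_nonneg.mpr (hw1 (k / 2)))]
  have hrhotop : rho 0 = r := by
    simp [hrho, hwgt]
  -- continuity moduli at the endpoints
  have h9a : ∀ ε, 0 < ε → ∃ η, 0 < η ∧ ∀ k, ce k < a + η → rho k < ε := by
    intro ε hε
    obtain ⟨N, hN⟩ := hwtend (ε / r) (by positivity)
    refine ⟨x N - a, by linarith [hxa N], fun k hk => ?_⟩
    have hk' : ce k < x N := by linarith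
    by_cases hk2 : k % 2 = 0
    · simp only [hce, if_pos hk2] at hk'
      have hgt : N < k / 2 + 1 := by
        by_contra hle
        push_neg at hle
        exact absurd (hxmono _ _ hle) (not_le.mpr hk')
      have hNk : N ≤ k / 2 := by omega
      have := hN (k / 2) hNk
      simp only [hrho]
      calc r * wgt (k / 2) < r * (ε / r) := by
            exact mul_lt_mul_of_pos_left this hr
        _ = ε := by field_simp
    · exfalso
      simp only [hce, if_neg hk2] at hk'
      exact absurd hk' (not_lt.mpr (hxley N (k / 2)))
  have h9b : ∀ ε, 0 < ε → ∃ η, 0 < η ∧ ∀ k, b - η < de k → rho k < ε := by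
    intro ε hε
    obtain ⟨N, hN⟩ := hwtend (ε / r) (by positivity)
    refine ⟨b - y N, by linarith [hybb N], fun k hk => ?_⟩
    have hk' : y N < de k := by linarith
    by_cases hk2 : k % 2 = 0
    · exfalso
      simp only [hde, if_pos hk2] at hk'
      exact absurd hk' (not_lt.mpr (hxley (k / 2) N))
    · simp only [hde, if_neg hk2] at hk'
      have hgt : N < k / 2 + 1 := by
        by_contra hle
        push_neg at hle
        exact absurd (hymono _ _ hle) (not_le.mpr hk')
      have hNk : N ≤ k / 2 := by omega
      have := hN (k / 2) hNk
      simp only [hrho]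
      calc r * wgt (k / 2) < r * (ε / r) := mul_lt_mul_of_pos_left this hr
        _ = ε := by field_simp
  -- the copies, obtained from the induction hypothesis
  have hcopy : ∀ k : ℕ, ∃ f F : ℝ → ℝ, GoodPair (ce k) (de k) (rho k) f F ∧
      ce k ∈ derivIter (DF (ce k) (de k) F) (Icc (ce k) (de k)) (rk k) ∧
      de k ∈ derivIter (DF (ce k) (de k) F) (Icc (ce k) (de k)) (rk k) := by
    intro k
    have hlt : rk k < α := (e ((Nat.unpair (k / 2)).1)).2
    have hcard : (rk k).card ≤ Cardinal.aleph0 :=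
      le_trans (Ordinal.card_le_card hlt.le) hα
    exact IH (rk k) hlt hcard (ce k) (de k) (hh1 k).2.1 (rho k) (hrho0 k)
  choose g G hg1 hg2 hg3 using hcopy
  -- the glued pair
  set gd : GlueData a b r :=
    ⟨ce, de, rho, g, G, hab, hr, hh1, hh2, hh3, hh10, hrho0, hrhor, ⟨0, hrhotop⟩,
      h9a, h9b, hg1⟩ with hgd
  have hIccsub : ∀ k, Icc (ce k) (de k) ⊆ Icc a b := fun k z hz =>
    ⟨(hh1 k).1.trans hz.1, hz.2.trans (hh1 k).2.2⟩
  have heqon : ∀ k, Set.EqOn gd.F (G k) (Icc (ce k) (de k)) := fun k => gd.eqOn k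
  have hcomp : ∀ k, ce k ∈ derivIter (DF a b gd.F) (Icc a b) (rk k) ∧
      de k ∈ derivIter (DF a b gd.F) (Icc a b) (rk k) := by
    intro k
    have hcmp := dj_derivIter_compare (F := gd.F) (G := G k)
      (hIccsub k) (hIccsub k) (heqon k) (rk k)
    exact ⟨hcmp (hg2 k), hcmp (hg3 k)⟩
  have hosc : ∀ k, osc gd.F (Icc (ce k) (de k)) = rho k := by
    intro k
    rw [dj_osc_congr (heqon k)]
    exact dj_goodPair_osc (hg1 k) (hh1 k).2.1 (hrho0 k)
  -- membership of `a` in all the iterated derived sets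
  have hmemA : ∀ β : Ordinal.{0}, β ≤ α → a ∈ derivIter (DF a b gd.F) (Icc a b) β := by
    intro β
    induction β using Ordinal.induction with
    | _ β IHm =>
    intro hβα
    rcases Ordinal.zero_or_succ_or_isSuccLimit β with rfl | ⟨γ, rfl⟩ | hlim
    · rw [dj_derivIter_zero]; exact left_mem_Icc.mpr hab.le
    · have hγα : γ < α := lt_of_lt_of_le (Order.lt_succ γ) hβα
      rw [← Ordinal.add_one_eq_succ, dj_derivIter_succ]
      refine ⟨IHm γ (Order.lt_succ γ) hγα.le, fun c' d' hc' hd' hAC => ?_⟩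
      obtain ⟨n, hn⟩ := he ⟨γ, hγα⟩
      refine dj_refute (ε₀ := r * q ^ (n + 1)) (by positivity) hAC ?_
      intro δ hδ
      obtain ⟨J, hJ⟩ := exists_pow_lt_of_lt_one
        (lt_min (div_pos hδ hba) (div_pos (by linarith : (0:ℝ) < d' - a) hba)) hq1
      have hqJ : q ^ (J + 1) ≤ q ^ J := pow_le_pow_of_le_one hq0.le hq1.le (Nat.le_succ J)
      have hJδ : (b - a) * q ^ (J + 1) < δ := by
        have h2 : q ^ J < δ / (b - a) := lt_of_lt_of_le hJ (min_le_left _ _)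
        rw [lt_div_iff₀ hba] at h2
        nlinarith
      have hJd' : x J < d' := by
        have h2 : q ^ J < (d' - a) / (b - a) := lt_of_lt_of_le hJ (min_le_right _ _)
        rw [lt_div_iff₀ hba] at h2
        simp only [hx]
        nlinarith
      obtain ⟨M, hJM, hMsum⟩ := dj_harmonic J
      have hkey : ∀ j : ℕ, J ≤ j →
          ce (2 * Nat.pair n j) = x (Nat.pair n j + 1) ∧
          de (2 * Nat.pair n j) = x (Nat.pair n j) ∧
          rk (2 * Nat.pair n j) = γ := by
        intro j _
        refine ⟨?_, ?_, ?_⟩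
        · simp only [hce, if_pos (by omega : 2 * Nat.pair n j % 2 = 0),
            (by omega : 2 * Nat.pair n j / 2 = Nat.pair n j)]
        · simp only [hde, if_pos (by omega : 2 * Nat.pair n j % 2 = 0),
            (by omega : 2 * Nat.pair n j / 2 = Nat.pair n j)]
        · simp only [hrk, (by omega : 2 * Nat.pair n j / 2 = Nat.pair n j), Nat.unpair_pair]
          rw [hn]
      refine ⟨Finset.Ico J M, fun j => x (Nat.pair n j + 1), fun j => x (Nat.pair n j),
        ⟨J, Finset.mem_Ico.mpr ⟨le_rfl, hJM⟩⟩, ?_, ?_, ?_, ?_⟩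
      · intro j hj
        have hjJ : J ≤ j := (Finset.mem_Ico.mp hj).1
        have hpJ : J ≤ Nat.pair n j := le_trans hjJ (Nat.right_le_pair n j)
        obtain ⟨hu, hv, hrkk⟩ := hkey j hjJ
        have hxJd : x (Nat.pair n j) < d' := lt_of_le_of_lt (hxmono J _ hpJ) hJd'
        have hmem1 : x (Nat.pair n j + 1) ∈ derivIter (DF a b gd.F) (Icc a b) γ := by
          have := (hcomp (2 * Nat.pair n j)).1
          rwa [hu, hrkk] at this
        have hmem2 : x (Nat.pair n j) ∈ derivIter (DF a b gd.F) (Icc a b) γ := by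
          have := (hcomp (2 * Nat.pair n j)).2
          rwa [hv, hrkk] at this
        refine ⟨hxanti _ _ (Nat.lt_succ_self _), ⟨⟨?_, ?_⟩, hmem1⟩, ⟨⟨?_, ?_⟩, hmem2⟩, ?_⟩
        · linarith [hxa (Nat.pair n j + 1)]
        · linarith [hxanti (Nat.pair n j) (Nat.pair n j + 1) (Nat.lt_succ_self _)]
        · linarith [hxa (Nat.pair n j)]
        · exact hxJd.le
        · intro w hw
          exact ⟨le_trans (hxa _).le hw.1, hw.2.trans (hxb _).le⟩
      · intro j hj j' hj' hjj'
        have hne : Nat.pair n j ≠ Nat.pair n j' := fun hc => hjj' (by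
          have := congrArg (fun t => (Nat.unpair t).2) hc
          simpa [Nat.unpair_pair] using this)
        rcases hne.lt_or_gt with h | h
        · right; exact hxmono _ _ (by omega)
        · left; exact hxmono _ _ (by omega)
      · have hterm : ∀ j ∈ Finset.Ico J M,
            x (Nat.pair n j) - x (Nat.pair n j + 1) ≤ (b - a) * q ^ (j + 2) := by
          intro j _
          have he1 : x (Nat.pair n j) - x (Nat.pair n j + 1)
              = (b - a) * q ^ (Nat.pair n j + 2) := by
            simp only [hx, hq]
            ring
          rw [he1]
          have h2 : q ^ (Nat.pair n j + 2) ≤ q ^ (j + 2) :=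
            pow_le_pow_of_le_one hq0.le hq1.le (by
              have := Nat.right_le_pair n j
              omega)
          nlinarith
        calc (∑ j ∈ Finset.Ico J M, (x (Nat.pair n j) - x (Nat.pair n j + 1)))
            ≤ ∑ j ∈ Finset.Ico J M, (b - a) * q ^ (j + 2) := Finset.sum_le_sum hterm
          _ = (b - a) * ∑ j ∈ Finset.Ico J M, q ^ (j + 2) := by rw [Finset.mul_sum]
          _ ≤ (b - a) * q ^ (J + 1) := by
              have := dj_geom J M
              rw [← hq] at this
              nlinarith
          _ < δ := hJδ
      · have hterm : ∀ j ∈ Finset.Ico J M,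
            r * (q ^ (n + 1) * (1 / ((j:ℝ) + 1)))
              ≤ osc gd.F (Icc (x (Nat.pair n j + 1)) (x (Nat.pair n j))) := by
          intro j hj
          have hjJ : J ≤ j := (Finset.mem_Ico.mp hj).1
          obtain ⟨hu, hv, _⟩ := hkey j hjJ
          rw [← hu, ← hv, hosc (2 * Nat.pair n j)]
          simp only [hrho, (by omega : 2 * Nat.pair n j / 2 = Nat.pair n j)]
          nlinarith [hwlb n j, hr.le]
        calc r * q ^ (n + 1) = r * q ^ (n + 1) * 1 := by ring
          _ ≤ r * q ^ (n + 1) * ∑ j ∈ Finset.Ico J M, (1 / ((j:ℝ) + 1)) :=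
              mul_le_mul_of_nonneg_left hMsum (by positivity)
          _ = ∑ j ∈ Finset.Ico J M, r * (q ^ (n + 1) * (1 / ((j:ℝ) + 1))) := by
              rw [Finset.mul_sum]
              exact Finset.sum_congr rfl fun j _ => by ring
          _ ≤ ∑ j ∈ Finset.Ico J M,
                osc gd.F (Icc (x (Nat.pair n j + 1)) (x (Nat.pair n j))) :=
              Finset.sum_le_sum hterm
    · rw [dj_derivIter_limit _ _ hlim]
      exact mem_iInter.mpr fun γ => IHm γ.1 γ.2 (le_trans γ.2.le hβα)
  -- membership of `b` in all the iterated derived sets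
  have hmemB : ∀ β : Ordinal.{0}, β ≤ α → b ∈ derivIter (DF a b gd.F) (Icc a b) β := by
    intro β
    induction β using Ordinal.induction with
    | _ β IHm =>
    intro hβα
    rcases Ordinal.zero_or_succ_or_isSuccLimit β with rfl | ⟨γ, rfl⟩ | hlim
    · rw [dj_derivIter_zero]; exact right_mem_Icc.mpr hab.le
    · have hγα : γ < α := lt_of_lt_of_le (Order.lt_succ γ) hβα
      rw [← Ordinal.add_one_eq_succ, dj_derivIter_succ]
      refine ⟨IHm γ (Order.lt_succ γ) hγα.le, fun c' d' hc' hd' hAC => ?_⟩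
      obtain ⟨n, hn⟩ := he ⟨γ, hγα⟩
      refine dj_refute (ε₀ := r * q ^ (n + 1)) (by positivity) hAC ?_
      intro δ hδ
      obtain ⟨J, hJ⟩ := exists_pow_lt_of_lt_one
        (lt_min (div_pos hδ hba) (div_pos (by linarith : (0:ℝ) < b - c') hba)) hq1
      have hqJ : q ^ (J + 1) ≤ q ^ J := pow_le_pow_of_le_one hq0.le hq1.le (Nat.le_succ J)
      have hJδ : (b - a) * q ^ (J + 1) < δ := by
        have h2 : q ^ J < δ / (b - a) := lt_of_lt_of_le hJ (min_le_left _ _)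
        rw [lt_div_iff₀ hba] at h2
        nlinarith
      have hJc' : c' < y J := by
        have h2 : q ^ J < (b - c') / (b - a) := lt_of_lt_of_le hJ (min_le_right _ _)
        rw [lt_div_iff₀ hba] at h2
        simp only [hy]
        nlinarith
      obtain ⟨M, hJM, hMsum⟩ := dj_harmonic J
      have hkey : ∀ j : ℕ, J ≤ j →
          ce (2 * Nat.pair n j + 1) = y (Nat.pair n j) ∧
          de (2 * Nat.pair n j + 1) = y (Nat.pair n j + 1) ∧
          rk (2 * Nat.pair n j + 1) = γ := by
        intro j _
        refine ⟨?_, ?_, ?_⟩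
        · simp only [hce, if_neg (by omega : ¬(2 * Nat.pair n j + 1) % 2 = 0),
            (by omega : (2 * Nat.pair n j + 1) / 2 = Nat.pair n j)]
        · simp only [hde, if_neg (by omega : ¬(2 * Nat.pair n j + 1) % 2 = 0),
            (by omega : (2 * Nat.pair n j + 1) / 2 = Nat.pair n j)]
        · simp only [hrk, (by omega : (2 * Nat.pair n j + 1) / 2 = Nat.pair n j),
            Nat.unpair_pair]
          rw [hn]
      refine ⟨Finset.Ico J M, fun j => y (Nat.pair n j), fun j => y (Nat.pair n j + 1),
        ⟨J, Finset.mem_Ico.mpr ⟨le_rfl, hJM⟩⟩, ?_, ?_, ?_, ?_⟩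
      · intro j hj
        have hjJ : J ≤ j := (Finset.mem_Ico.mp hj).1
        have hpJ : J ≤ Nat.pair n j := le_trans hjJ (Nat.right_le_pair n j)
        obtain ⟨hu, hv, hrkk⟩ := hkey j hjJ
        have hyJc : c' < y (Nat.pair n j) := lt_of_lt_of_le hJc' (hymono J _ hpJ)
        have hmem1 : y (Nat.pair n j) ∈ derivIter (DF a b gd.F) (Icc a b) γ := by
          have := (hcomp (2 * Nat.pair n j + 1)).1
          rwa [hu, hrkk] at this
        have hmem2 : y (Nat.pair n j + 1) ∈ derivIter (DF a b gd.F) (Icc a b) γ := by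
          have := (hcomp (2 * Nat.pair n j + 1)).2
          rwa [hv, hrkk] at this
        refine ⟨hymono' _ _ (Nat.lt_succ_self _), ⟨⟨?_, ?_⟩, hmem1⟩, ⟨⟨?_, ?_⟩, hmem2⟩, ?_⟩
        · exact hyJc.le
        · linarith [hybb (Nat.pair n j)]
        · linarith [hymono' (Nat.pair n j) (Nat.pair n j + 1) (Nat.lt_succ_self _)]
        · linarith [hybb (Nat.pair n j + 1)]
        · intro w hw
          exact ⟨le_trans (hya _).le hw.1, hw.2.trans (hybb _).le⟩
      · intro j hj j' hj' hjj'
        have hne : Nat.pair n j ≠ Nat.pair n j' := fun hc => hjj' (by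
          have := congrArg (fun t => (Nat.unpair t).2) hc
          simpa [Nat.unpair_pair] using this)
        rcases hne.lt_or_gt with h | h
        · left; exact hymono _ _ (by omega)
        · right; exact hymono _ _ (by omega)
      · have hterm : ∀ j ∈ Finset.Ico J M,
            y (Nat.pair n j + 1) - y (Nat.pair n j) ≤ (b - a) * q ^ (j + 2) := by
          intro j _
          have he1 : y (Nat.pair n j + 1) - y (Nat.pair n j)
              = (b - a) * q ^ (Nat.pair n j + 2) := by
            simp only [hy, hq]
            ring
          rw [he1]
          have h2 : q ^ (Nat.pair n j + 2) ≤ q ^ (j + 2) :=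
            pow_le_pow_of_le_one hq0.le hq1.le (by
              have := Nat.right_le_pair n j
              omega)
          nlinarith
        calc (∑ j ∈ Finset.Ico J M, (y (Nat.pair n j + 1) - y (Nat.pair n j)))
            ≤ ∑ j ∈ Finset.Ico J M, (b - a) * q ^ (j + 2) := Finset.sum_le_sum hterm
          _ = (b - a) * ∑ j ∈ Finset.Ico J M, q ^ (j + 2) := by rw [Finset.mul_sum]
          _ ≤ (b - a) * q ^ (J + 1) := by
              have := dj_geom J M
              rw [← hq] at this
              nlinarith
          _ < δ := hJδ
      · have hterm : ∀ j ∈ Finset.Ico J M,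
            r * (q ^ (n + 1) * (1 / ((j:ℝ) + 1)))
              ≤ osc gd.F (Icc (y (Nat.pair n j)) (y (Nat.pair n j + 1))) := by
          intro j hj
          have hjJ : J ≤ j := (Finset.mem_Ico.mp hj).1
          obtain ⟨hu, hv, _⟩ := hkey j hjJ
          rw [← hu, ← hv, hosc (2 * Nat.pair n j + 1)]
          simp only [hrho, (by omega : (2 * Nat.pair n j + 1) / 2 = Nat.pair n j)]
          nlinarith [hwlb n j, hr.le]
        calc r * q ^ (n + 1) = r * q ^ (n + 1) * 1 := by ring
          _ ≤ r * q ^ (n + 1) * ∑ j ∈ Finset.Ico J M, (1 / ((j:ℝ) + 1)) :=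
              mul_le_mul_of_nonneg_left hMsum (by positivity)
          _ = ∑ j ∈ Finset.Ico J M, r * (q ^ (n + 1) * (1 / ((j:ℝ) + 1))) := by
              rw [Finset.mul_sum]
              exact Finset.sum_congr rfl fun j _ => by ring
          _ ≤ ∑ j ∈ Finset.Ico J M,
                osc gd.F (Icc (y (Nat.pair n j)) (y (Nat.pair n j + 1))) :=
              Finset.sum_le_sum hterm
    · rw [dj_derivIter_limit _ _ hlim]
      exact mem_iInter.mpr fun γ => IHm γ.1 γ.2 (le_trans γ.2.le hβα)
  exact ⟨gd.f, gd.F, gd.goodPair, hmemA α le_rfl, hmemB α le_rfl⟩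

/-- There are Denjoy integrable functions whose derivative `D_F` vanishes only at
arbitrarily high countable ordinals. -/
theorem exists_denjoy_high_rank (α : Ordinal.{0}) (hα : α.card ≤ Cardinal.aleph0)
    (a b : ℝ) (hab : a < b) (r : ℝ) (hr : 0 < r) :
    (∃ f F : ℝ → ℝ, HasDenjoyIntegralFn a b f F ∧ F b = 0 ∧ f a = 0 ∧ f b = 0 ∧
      osc F (Icc a b) = r ∧
      a ∈ derivIter (DF a b F) (Icc a b) α ∧ b ∈ derivIter (DF a b F) (Icc a b) α) ∧
    (∃ f F : ℝ → ℝ, HasDenjoyIntegralFn a b f F ∧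
      ∀ β : Ordinal.{0},
        derivIter (DF a b F) (Icc a b) β = derivIter (DF a b F) (Icc a b) (β + 1) →
        α < β) := by
  constructor
  · obtain ⟨f, F, hgp, hA, hB⟩ := dj_main α hα a b hab r hr
    refine ⟨f, F, hgp.1, ?_, ?_, ?_, ?_, hA, hB⟩
    · exact hgp.2.2.1 b (fun hc => lt_irrefl b hc.2)
    · exact hgp.2.2.2.2.2.2 a (fun hc => lt_irrefl a hc.1)
    · exact hgp.2.2.2.2.2.2 b (fun hc => lt_irrefl b hc.2)
    · exact dj_goodPair_osc hgp hab hr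
  · have hcard : (α + 1).card ≤ Cardinal.aleph0 := by
      rw [Ordinal.card_add, Ordinal.card_one]
      calc α.card + 1 ≤ Cardinal.aleph0 + 1 := add_le_add_left hα 1
        _ = Cardinal.aleph0 := Cardinal.add_one_eq le_rfl
    obtain ⟨f, F, hgp, hA, _⟩ := dj_main (α + 1) hcard a b hab 1 one_pos
    refine ⟨f, F, hgp.1, fun β hfix => ?_⟩
    by_contra hle
    push_neg at hle
    have hfix' : ∀ γ, β ≤ γ →
        derivIter (DF a b F) (Icc a b) γ = derivIter (DF a b F) (Icc a b) β :=
      fun γ hγ => dj_derivIter_fixed (fun _ => dj_DF_subset) hfix hγ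
    have hKa : a ∈ derivIter (DF a b F) (Icc a b) β := by
      have h := hA
      rw [hfix' (α + 1) (le_trans hle (le_self_add))] at h
      exact h
    have hKcl : IsClosed (derivIter (DF a b F) (Icc a b) β) :=
      dj_derivIter_isClosed (fun _ hS => dj_DF_isClosed hS) isClosed_Icc β
    have hKsub : derivIter (DF a b F) (Icc a b) β ⊆ Icc a b :=
      dj_derivIter_subset (fun _ => dj_DF_subset) β
    have hKfix : DF a b F (derivIter (DF a b F) (Icc a b) β)
        = derivIter (DF a b F) (Icc a b) β := by
      calc DF a b F (derivIter (DF a b F) (Icc a b) β)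
          = derivIter (DF a b F) (Icc a b) (β + 1) := (dj_derivIter_succ _ _ _).symm
        _ = derivIter (DF a b F) (Icc a b) β := hfix.symm
    exact dj_no_fixed_point hgp.1.2.2.1 hKcl hKsub ⟨a, hKa⟩ hKfix
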